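/- For an integer k ≥ 1, let y_m = 1 / (1 + (1 − 2/(2k+1))^{2m−2}), μ_m = 1/2 − 1/(4k) + y_m/(2k) for 1 ≤ m ≤ k, β₁ = 1, β_{m+1} = β_m · μ_m/(1 − μ_{m+1}), and α_m = β_m / Σ_{i=1}^k β_i. Then α₁(1 − μ₁) + α_k μ_k ≤ 4/(3k), and hence (1/4)·(1 − α₁(1 − μ₁) − α_k μ_k) ≥ 1/4 − 1/(3k). -/

import Mathlib

noncomputable section

/-- `y_m = 1 / (1 + (1 - 2/(2k+1))^(2m-2))`. -/
def yk (k m : ℕ) : ℝ := 1 / (1 + (1 - 2/(2*(k:ℝ) + 1)) ^ (2*m - 2))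

/-- `μ_m = 1/2 - 1/(4k) + y_m/(2k)`. -/
def muk (k m : ℕ) : ℝ := 1/2 - 1/(4*(k:ℝ)) + yk k m / (2*(k:ℝ))

/-- `β₁ = 1` and `β_{m+1} = β_m · μ_m/(1 - μ_{m+1})`. -/
def betak (k : ℕ) : ℕ → ℝ
  | 0 => 1
  | 1 => 1
  | (m + 2) => betak k (m + 1) * muk k (m + 1) / (1 - muk k (m + 2))

/-- The normalized mixing probability `α_m = β_m / ∑_{i=1}^k β_i`. -/
def alphak (k m : ℕ) : ℝ := betak k m / ∑ i ∈ Finset.Icc 1 k, betak k i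

def rr (k : ℕ) : ℝ := (2*(k:ℝ) - 1)/(2*(k:ℝ) + 1)

lemma rr_pos (k : ℕ) (hk : 1 ≤ k) : 0 < rr k := by
  have hK : (1:ℝ) ≤ k := by exact_mod_cast hk
  exact div_pos (by linarith) (by linarith)

lemma rr_lt_one (k : ℕ) (hk : 1 ≤ k) : rr k < 1 := by
  have hK : (1:ℝ) ≤ k := by exact_mod_cast hk
  rw [rr, div_lt_one (by linarith)]; linarith

lemma rr_eq (k : ℕ) (hk : 1 ≤ k) : 1 - 2/(2*(k:ℝ) + 1) = rr k := by
  have hK : (1:ℝ) ≤ k := by exact_mod_cast hk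
  rw [rr]; field_simp; ring

lemma muk_succ (k n : ℕ) (hk : 1 ≤ k) :
    muk k (n+1) = (1 + rr k ^ (2*n+1)) / ((1 + rr k) * (1 + rr k ^ (2*n))) := by
  have hK : (1:ℝ) ≤ k := by exact_mod_cast hk
  have hr0 := rr_pos k hk
  have he : 2*(n+1) - 2 = 2*n := by omega
  have hs : (0:ℝ) < rr k ^ (2*n) := pow_pos hr0 _
  rw [muk, yk, rr_eq k hk, he, pow_succ]
  generalize rr k ^ (2*n) = s at hs
  rw [rr]
  have h1 : (2*(k:ℝ)+1) ≠ 0 := by positivity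
  have h2 : (2*(k:ℝ)-1) ≠ 0 := by intro h; nlinarith
  have h3 : (1:ℝ) + s ≠ 0 := by positivity
  have h4 : (4:ℝ)*k ≠ 0 := by positivity
  have h5 : (2:ℝ)*k ≠ 0 := by positivity
  have h6 : 1 + (2*(k:ℝ)-1)/(2*(k:ℝ)+1) ≠ 0 := by
    have : 0 < (2*(k:ℝ)-1)/(2*(k:ℝ)+1) := div_pos (by linarith) (by linarith)
    positivity
  field_simp
  ring


lemma betak_succ (k : ℕ) (hk : 1 ≤ k) (n : ℕ) :
    betak k (n+1) = (1 + rr k ^ (2*n)) / (2 * rr k ^ n) := by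
  induction n with
  | zero => simp [betak]
  | succ m ih =>
    have hr0 := rr_pos k hk
    have hr1 : (0:ℝ) < 1 + rr k := by linarith
    have h2m : (0:ℝ) < rr k ^ (2*m) := pow_pos hr0 _
    have h2m2 : (0:ℝ) < rr k ^ (2*m+2) := pow_pos hr0 _
    have h2m1 : (0:ℝ) < rr k ^ (2*m+1) := pow_pos hr0 _
    have hm : (0:ℝ) < rr k ^ m := pow_pos hr0 _
    have hsub : 1 - muk k (m+2) = (rr k + rr k ^ (2*m+2))/((1 + rr k) * (1 + rr k ^ (2*m+2))) := by
      have := muk_succ k (m+1) hk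
      have he : 2*(m+1) = 2*m+2 := by ring
      have he2 : 2*(m+1)+1 = 2*m+3 := by ring
      rw [show m+1+1 = m+2 from rfl] at this
      rw [this, he]
      have hB : ((1:ℝ) + rr k) * (1 + rr k ^ (2*m+2)) ≠ 0 := by positivity
      field_simp
      ring
    show betak k (m+1) * muk k (m+1) / (1 - muk k (m+2)) = _
    rw [ih, muk_succ k m hk, hsub]
    have hden : rr k + rr k ^ (2*m+2) ≠ 0 := by positivity
    field_simp
    ring
  
lemma sum_betak (k : ℕ) (hk : 1 ≤ k) :
    ∑ i ∈ Finset.Icc 1 k, betak k i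
      = (1 - rr k ^ k) * (rr k + rr k ^ k) / (2 * rr k ^ k * (1 - rr k)) := by
  have hr0 := rr_pos k hk
  have hr1 := rr_lt_one k hk
  have hrne : rr k ≠ 1 := ne_of_lt hr1
  have hrinv : (rr k)⁻¹ ≠ 1 := by
    intro h; exact hrne (by rw [← inv_inv (rr k), h, inv_one])
  have h1 : ∑ i ∈ Finset.Icc 1 k, betak k i = ∑ j ∈ Finset.range k, betak k (1 + j) := by
    rw [show Finset.Icc 1 k = Finset.Ico 1 (k+1) by rw [Finset.Ico_add_one_right_eq_Icc],
      Finset.sum_Ico_eq_sum_range]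
    simp
  rw [h1]
  have h2 : ∀ j ∈ Finset.range k, betak k (1+j) = (1/2) * (((rr k)⁻¹)^j + (rr k)^j) := by
    intro j _
    rw [add_comm 1 j, betak_succ k hk j]
    have hj : (0:ℝ) < rr k ^ j := pow_pos hr0 _
    rw [inv_pow]
    field_simp
    ring
  rw [Finset.sum_congr rfl h2, ← Finset.mul_sum, Finset.sum_add_distrib,
    geom_sum_eq hrinv, geom_sum_eq hrne, inv_pow]
  have hu : (0:ℝ) < rr k ^ k := pow_pos hr0 _
  have h3 : (rr k)⁻¹ - 1 ≠ 0 := by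
    have : 1 < (rr k)⁻¹ := (one_lt_inv₀ hr0).2 hr1
    intro h; linarith
  have h4 : rr k - 1 ≠ 0 := by intro h; linarith
  have h5 : (1:ℝ) - rr k ≠ 0 := by intro h; linarith
  field_simp
  ring


lemma quad_bound (x : ℝ) (hx : 0 ≤ x) (n : ℕ) :
    1 + n*x + (n:ℝ)*((n:ℝ)-1)/2 * x^2 ≤ (1+x)^n := by
  induction n with
  | zero => simp
  | succ m ih =>
    have hc : (0:ℝ) ≤ (m:ℝ)*((m:ℝ)-1) := by
      rcases Nat.eq_zero_or_pos m with h | h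
      · simp [h]
      · have : (1:ℝ) ≤ m := by exact_mod_cast h
        nlinarith
    have hstep : (1 + m*x + (m:ℝ)*((m:ℝ)-1)/2 * x^2) * (1+x) ≤ (1+x)^(m+1) := by
      rw [pow_succ]
      apply mul_le_mul_of_nonneg_right ih (by linarith)
    have hm : (0:ℝ) ≤ m := Nat.cast_nonneg m
    push_cast
    nlinarith [mul_nonneg (mul_nonneg hc (sq_nonneg x)) hx]

lemma rk_le (k : ℕ) (hk : 1 ≤ k) : rr k ^ k ≤ 5/11 := by
  have hK : (1:ℝ) ≤ k := by exact_mod_cast hk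
  set ε : ℝ := 2/(2*(k:ℝ)-1) with hε
  have hd : (0:ℝ) < 2*(k:ℝ)-1 := by linarith
  have hεpos : 0 < ε := by rw [hε]; positivity
  have hεd : ε * (2*(k:ℝ)-1) = 2 := by
    rw [hε]; field_simp
  have hr : rr k = (1+ε)⁻¹ := by
    rw [rr, hε, inv_eq_one_div]
    rw [div_eq_div_iff (by linarith) (by positivity)]
    field_simp
    ring
  have hq := quad_bound ε (le_of_lt hεpos) k
  have h115 : (11:ℝ)/5 ≤ 1 + k*ε + (k:ℝ)*((k:ℝ)-1)/2 * ε^2 := by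
    have hεle2 : ε ≤ 2 := by
      rw [hε, div_le_iff₀ (by linarith)]; linarith
    nlinarith [hεd, sq_nonneg ε, mul_pos hεpos hεpos]
  have hpow : (11:ℝ)/5 ≤ (1+ε)^k := le_trans h115 hq
  rw [hr, inv_pow]
  rw [inv_le_comm₀ (by positivity) (by norm_num)]
  linarith [hpow]


theorem stmt_16 (k : ℕ) (hk : 1 ≤ k) :
    alphak k 1 * (1 - muk k 1) + alphak k k * muk k k ≤ 4/(3*(k:ℝ)) ∧
    (1/4) * (1 - alphak k 1 * (1 - muk k 1) - alphak k k * muk k k)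
      ≥ 1/4 - 1/(3*(k:ℝ)) := by
  have hK : (1:ℝ) ≤ k := by exact_mod_cast hk
  set K : ℝ := (k:ℝ) with hKdef
  set r := rr k with hrdef
  have hr0 := rr_pos k hk
  have hr1 := rr_lt_one k hk
  set u := r ^ k with hudef
  have hu0 : 0 < u := pow_pos hr0 k
  have hu1 : u < 1 := pow_lt_one₀ (le_of_lt hr0) hr1 (by omega)
  have hu511 : u ≤ 5/11 := rk_le k hk
  have hrx : r = (2*K - 1)/(2*K + 1) := by rw [hrdef, rr]
  have hA1 : (1 - r) * (2*K + 1) = 2 := by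
    rw [hrx]; field_simp; norm_num
  have hA2 : (1 + r) * (2*K + 1) = 4*K := by
    rw [hrx]; field_simp; ring
  obtain ⟨n, hkn⟩ : ∃ n, k = n + 1 := ⟨k - 1, by omega⟩
  -- closed forms
  have hS : ∑ i ∈ Finset.Icc 1 k, betak k i = (1 - u) * (r + u) / (2 * u * (1 - r)) :=
    sum_betak k hk
  have hmu1 : muk k 1 = 1/2 := by
    rw [show muk k 1 = muk k (0 + 1) from rfl, muk_succ k 0 hk]
    norm_num
    rw [div_eq_div_iff (by positivity) (by norm_num : (2:ℝ) ≠ 0)]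
    ring
  have hX : betak k k * muk k k = (r + u^2) / (2*u*(1+r)) := by
    have hb := betak_succ k hk n
    have hm := muk_succ k n hk
    rw [← hkn] at hb hm
    rw [hb, hm, ← hrdef]
    have e1 : r^(2*n) = (r^n)^2 := by rw [two_mul, pow_add]; ring
    have e2 : r^(2*n+1) = (r^n)^2 * r := by rw [pow_succ, e1]
    have hupow : u = r^n * r := by rw [hudef, hkn, pow_succ]
    rw [e1, e2, hupow]
    have hv : (0:ℝ) < r^n := pow_pos hr0 n
    rw [div_mul_div_comm, div_eq_div_iff (by positivity) (by positivity)]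
    ring
  have hbeta1 : betak k 1 = 1 := rfl
  have hA : alphak k 1 * (1 - muk k 1) + alphak k k * muk k k
      = (1 + u) * (1 - r) / ((1 - u) * (1 + r)) := by
    rw [alphak, alphak, hS, hmu1, hbeta1, div_mul_eq_mul_div, div_mul_eq_mul_div, hX]
    have hne1 : (1:ℝ) - u ≠ 0 := by linarith
    have hne2 : (1:ℝ) + r ≠ 0 := by linarith
    have hne3 : (1:ℝ) - r ≠ 0 := by linarith
    have hne5 : r + u ≠ 0 := by positivity
    have hune : u ≠ 0 := ne_of_gt hu0
    have hd : (2:ℝ) * u * (1 - r) ≠ 0 := by positivity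
    have hd2 : (2:ℝ) * u * (1 + r) ≠ 0 := by positivity
    field_simp
    ring
  have h2K1 : (0:ℝ) < 2*K + 1 := by linarith
  have h3K : (0:ℝ) < 3*K := by linarith
  have main : alphak k 1 * (1 - muk k 1) + alphak k k * muk k k ≤ 4/(3*K) := by
    rw [hA, div_le_div_iff₀ (mul_pos (by linarith : (0:ℝ) < 1 - u) (by linarith : (0:ℝ) < 1 + r)) h3K]
    have key : (2*K+1) * (4*((1-u)*(1+r)) - (1+u)*(1-r)*(3*K))
        = 16*K*(1-u) - 6*K*(1+u) := by
      linear_combination (4*(1-u))*hA2 - (3*K*(1+u))*hA1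
    nlinarith [key, hu511, hK, h2K1]
  refine ⟨main, ?_⟩
  have e : 4/(3*K) = 4*(1/(3*K)) := by ring
  rw [e] at main
  linarith

end
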